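/- Let $Y,S$ be jointly distributed finite random variables with $Y$ taking values in a set of size $N$, with $U$ uniform on that set, and let $k \ge 2$. Then $D_\infty(P_Y\|P_U\mid P_S) \le \frac{k-1}{k} D_k(P_Y\|P_U\mid P_S) + \frac{1}{k}\log_q N$, where $D_\infty(P\|U) = \max_u \log_q\big(P(u)/U(u)\big)$ and $D_\infty(P_Y\|P_U\mid P_S) = \sum_s P_S(s) D_\infty(P_{Y|S}(\cdot|s)\|P_U)$. -/

import Mathlib

open Finset

private lemma logb_mono' {b x y : ℝ} (hb : 1 < b) (hx : 0 < x) (h : x ≤ y) :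
    Real.logb b x ≤ Real.logb b y :=
  (Real.logb_le_logb hb hx (hx.trans_le h)).mpr h

private lemma core_lemma {V : Type*} [Fintype V] [Nonempty V] (q : ℕ) (hq : 2 ≤ q)
    (k : ℕ) (hk : 2 ≤ k) (p : V → ℝ) (hp0 : ∀ u, 0 ≤ p u) (hp1 : ∑ u, p u = 1) :
    (⨆ u : V, Real.logb q (p u * (Fintype.card V : ℝ)))
      ≤ ((k : ℝ) - 1) / k *
          (((k : ℝ) - 1)⁻¹ * Real.logb q
            (∑ u, p u ^ (k : ℝ) * ((Fintype.card V : ℝ)⁻¹) ^ (1 - (k : ℝ))))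
        + (1 / (k : ℝ)) * Real.logb q (Fintype.card V) := by
  set N : ℝ := (Fintype.card V : ℝ) with hNdef
  have hN1 : (1 : ℝ) ≤ N := by
    rw [hNdef]; exact_mod_cast Fintype.card_pos (α := V)
  have hN0 : (0 : ℝ) < N := lt_of_lt_of_le one_pos hN1
  have hqR : (1 : ℝ) < (q : ℝ) := by exact_mod_cast hq.trans_lt' one_lt_two |>.trans_le le_rfl
  have hkR : (0 : ℝ) < (k : ℝ) := by positivity
  have hk1 : ((k : ℝ)) - 1 ≠ 0 := by
    have : (2 : ℝ) ≤ (k : ℝ) := by exact_mod_cast hk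
    linarith
  -- rewrite the rpow's
  have hrw : ∀ u : V, p u ^ ((k : ℝ)) * (N⁻¹) ^ (1 - (k : ℝ)) = p u ^ k * N ^ (k - 1) := by
    intro u
    have h1 : (N⁻¹) ^ (1 - (k : ℝ)) = N ^ ((k : ℝ) - 1) := by
      rw [Real.inv_rpow hN0.le, ← Real.rpow_neg hN0.le]
      ring_nf
    have h2 : N ^ ((k : ℝ) - 1) = N ^ (k - 1 : ℕ) := by
      rw [← Real.rpow_natCast N (k - 1)]
      congr 1
      have : ((k - 1 : ℕ) : ℝ) = (k : ℝ) - 1 := by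
        have := Nat.cast_sub (le_trans one_le_two hk) (R := ℝ) (m := 1) (n := k)
        simpa using this
      rw [this]
    rw [h1, h2, ← Real.rpow_natCast (p u) k]
  rw [Finset.sum_congr rfl fun u _ => hrw u]
  -- basic facts on p
  obtain ⟨u0, -, hmax⟩ := Finset.exists_max_image (Finset.univ : Finset V) p univ_nonempty
  have hmax' : ∀ u : V, p u ≤ p u0 := fun u => hmax u (mem_univ u)
  have hpu0 : 1 / N ≤ p u0 := by
    rw [div_le_iff₀ hN0]
    calc (1 : ℝ) = ∑ u, p u := hp1.symm
    _ ≤ ∑ _u : V, p u0 := Finset.sum_le_sum fun u _ => hmax' u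
    _ = p u0 * N := by rw [Finset.sum_const, card_univ]; push_cast [hNdef]; ring
  have hpu0pos : 0 < p u0 := lt_of_lt_of_le (by positivity) hpu0
  have hpu0N : 1 ≤ p u0 * N := by
    calc (1 : ℝ) = (1 / N) * N := by field_simp
    _ ≤ p u0 * N := mul_le_mul_of_nonneg_right hpu0 hN0.le
  set T : ℝ := ∑ u, p u ^ k * N ^ (k - 1 : ℕ) with hT
  have hTpos : 0 < T := by
    have : p u0 ^ k * N ^ (k - 1 : ℕ) ≤ T :=
      Finset.single_le_sum (f := fun u => p u ^ k * N ^ (k - 1 : ℕ))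
        (fun u _ => mul_nonneg (pow_nonneg (hp0 u) _) (by positivity)) (mem_univ u0)
    have h0 : 0 < p u0 ^ k * N ^ (k - 1 : ℕ) := by positivity
    linarith
  have hTN : T * N = (∑ u, p u ^ k) * N ^ k := by
    rw [hT, ← Finset.sum_mul, mul_assoc, ← pow_succ]
    congr 2
    omega
  -- key: logb (p u0 * N) ≤ (1/k) * logb (T * N)
  have hkey : Real.logb q (p u0 * N) ≤ (1 / (k : ℝ)) * Real.logb q (T * N) := by
    have hpow : (p u0 * N) ^ k ≤ T * N := by
      rw [hTN, mul_pow]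
      have : p u0 ^ k ≤ ∑ u, p u ^ k :=
        Finset.single_le_sum (f := fun u => p u ^ k) (fun u _ => pow_nonneg (hp0 u) _) (mem_univ u0)
      exact mul_le_mul_of_nonneg_right this (by positivity)
    have h1 : Real.logb q ((p u0 * N) ^ k) ≤ Real.logb q (T * N) :=
      logb_mono' hqR (pow_pos (mul_pos hpu0pos hN0) k) hpow
    rw [Real.logb_pow] at h1
    calc Real.logb q (p u0 * N) = (1 / (k : ℝ)) * ((k : ℝ) * Real.logb q (p u0 * N)) := by
          field_simp
    _ ≤ (1 / (k : ℝ)) * Real.logb q (T * N) := by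
          apply mul_le_mul_of_nonneg_left h1 (by positivity)
  -- the supremum
  have hsup : (⨆ u : V, Real.logb q (p u * N)) ≤ Real.logb q (p u0 * N) := by
    apply ciSup_le
    intro u
    rcases eq_or_lt_of_le (hp0 u) with h | h
    · rw [← h, zero_mul, Real.logb_zero]
      exact Real.logb_nonneg hqR hpu0N
    · exact logb_mono' hqR (by positivity) (mul_le_mul_of_nonneg_right (hmax' u) hN0.le)
  -- assemble
  have hrhs : ((k : ℝ) - 1) / k * (((k : ℝ) - 1)⁻¹ * Real.logb q T)
      + (1 / (k : ℝ)) * Real.logb q N = (1 / (k : ℝ)) * Real.logb q (T * N) := by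
    rw [Real.logb_mul hTpos.ne' hN0.ne']
    field_simp
  rw [hrhs]
  exact hsup.trans hkey

/-- Conditional Rényi divergence of order `β` from uniform:
`∑_s P_S(s) D_β(P_{Y|S}(·|s) ‖ U)` where `U` is uniform on `V`. -/
noncomputable def condRenyiDivUnif {V S : Type*} [Fintype V] [Fintype S]
    (q : ℕ) (β : ℝ) (J : V × S → ℝ) : ℝ :=
  ∑ s : S, (∑ u, J (u, s)) *
    ((β - 1)⁻¹ * Real.logb q
      (∑ u, (J (u, s) / ∑ u', J (u', s)) ^ β * ((Fintype.card V : ℝ)⁻¹) ^ (1 - β)))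

/-- Conditional `∞`-Rényi divergence from uniform:
`∑_s P_S(s) max_u log_q (P_{Y|S}(u|s)/U(u))`. -/
noncomputable def condRenyiDivInfUnif {V S : Type*} [Fintype V] [Fintype S] [Nonempty V]
    (q : ℕ) (J : V × S → ℝ) : ℝ :=
  ∑ s : S, (∑ u, J (u, s)) *
    (⨆ u : V, Real.logb q ((J (u, s) / ∑ u', J (u', s)) * (Fintype.card V : ℝ)))

/-- `D_∞(P_Y‖P_U|P_S) ≤ ((k-1)/k) D_k(P_Y‖P_U|P_S) + (1/k) log_q N` for `k ≥ 2`. -/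
theorem condRenyiDivInf_interpolation {V S : Type*} [Fintype V] [Fintype S] [Nonempty V]
    (q : ℕ) (hq : 2 ≤ q) (k : ℕ) (hk : 2 ≤ k)
    (J : V × S → ℝ) (hJ0 : ∀ z, 0 ≤ J z) (hJ1 : ∑ z, J z = 1) :
    condRenyiDivInfUnif q J
      ≤ ((k : ℝ) - 1) / k * condRenyiDivUnif q k J
        + (1 / (k : ℝ)) * Real.logb q (Fintype.card V) := by
  classical
  unfold condRenyiDivInfUnif condRenyiDivUnif
  set N : ℝ := (Fintype.card V : ℝ) with hNdef
  have hSsum : ∑ s : S, ∑ u, J (u, s) = 1 := by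
    rw [Finset.sum_comm, ← hJ1, ← Fintype.sum_prod_type']
  set M : S → ℝ := fun s =>
    ((k : ℝ) - 1)⁻¹ * Real.logb q
      (∑ u, (J (u, s) / ∑ u', J (u', s)) ^ (k : ℝ) * (N⁻¹) ^ (1 - (k : ℝ))) with hM
  have hmain : ∀ s : S,
      (∑ u, J (u, s)) * (⨆ u : V, Real.logb q ((J (u, s) / ∑ u', J (u', s)) * N))
        ≤ ((k : ℝ) - 1) / k * ((∑ u, J (u, s)) * M s)
          + (∑ u, J (u, s)) * ((1 / (k : ℝ)) * Real.logb q N) := by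
    intro s
    rcases eq_or_lt_of_le (Finset.sum_nonneg fun u _ => hJ0 (u, s)) with h | h
    · rw [← h]; simp
    · have h1 : ∑ u, J (u, s) / (∑ u', J (u', s)) = 1 := by
        rw [← Finset.sum_div, div_self h.ne']
      have hcore := core_lemma q hq k hk (fun u => J (u, s) / ∑ u', J (u', s))
        (fun u => div_nonneg (hJ0 (u, s)) (le_of_lt h)) h1
      calc (∑ u, J (u, s)) * (⨆ u : V, Real.logb q ((J (u, s) / ∑ u', J (u', s)) * N))
          ≤ (∑ u, J (u, s)) *
              (((k : ℝ) - 1) / k * M s + (1 / (k : ℝ)) * Real.logb q N) :=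
            mul_le_mul_of_nonneg_left hcore (le_of_lt h)
        _ = ((k : ℝ) - 1) / k * ((∑ u, J (u, s)) * M s)
            + (∑ u, J (u, s)) * ((1 / (k : ℝ)) * Real.logb q N) := by ring
  calc (∑ s : S, (∑ u, J (u, s)) *
          (⨆ u : V, Real.logb q ((J (u, s) / ∑ u', J (u', s)) * N)))
      ≤ ∑ s : S, (((k : ℝ) - 1) / k * ((∑ u, J (u, s)) * M s)
          + (∑ u, J (u, s)) * ((1 / (k : ℝ)) * Real.logb q N)) :=
        Finset.sum_le_sum fun s _ => hmain s
    _ = ((k : ℝ) - 1) / k * ∑ s : S, (∑ u, J (u, s)) * M s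
        + (1 / (k : ℝ)) * Real.logb q N := by
        rw [Finset.sum_add_distrib, ← Finset.mul_sum, ← Finset.sum_mul, hSsum, one_mul]
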